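/- Let (X,φ) be a Smale space and let x ∈ X be an asymptotic periodic point. Then the following conditions are equivalent: (i) x ∈ ω(x) ∪ α(x); (ii) x is a periodic point; (iii) ω(x) = α(x) = {x, φ(x), …, φ^{p_s−1}(x)} for some p_s ∈ ℕ; (iv) x is a recurrent point, i.e., x ∈ ω(x) ∩ α(x). -/

import Mathlib

open Filter Set Topology

noncomputable section

/-- Integer iterate of a homeomorphism. -/
def hIter {X : Type*} [TopologicalSpace X] (φ : X ≃ₜ X) (n : ℤ) (x : X) : X :=
  ((φ.toEquiv : Equiv.Perm X) ^ n) x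

/-- The cocycle sums `f^n` of a function `f : X → ℤ` along the iterates of `φ`:
`f^n(x) = Σ_{i=0}^{n-1} f(φ^i(x))` for `n > 0`, `f^0 = 0`, and
`f^n(x) = −Σ_{i=n}^{-1} f(φ^i(x))` for `n < 0`. -/
def cSum {X : Type*} [TopologicalSpace X] (φ : X ≃ₜ X) (f : X → ℤ) (n : ℤ) (x : X) : ℤ :=
  if 0 ≤ n then ∑ i ∈ Finset.range n.toNat, f (hIter φ i x)
  else -∑ i ∈ Finset.range (-n).toNat, f (hIter φ (n + i) x)

/-- Stable asymptotic pairs (limit definition). -/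
def asympS {X : Type*} [MetricSpace X] (φ : X ≃ₜ X) : Set (X × X) :=
  {p | Tendsto (fun n : ℕ => dist (hIter φ n p.1) (hIter φ n p.2)) atTop (nhds 0)}

/-- Unstable asymptotic pairs (limit definition). -/
def asympU {X : Type*} [MetricSpace X] (φ : X ≃ₜ X) : Set (X × X) :=
  {p | Tendsto (fun n : ℕ => dist (hIter φ (-(n : ℤ)) p.1) (hIter φ (-(n : ℤ)) p.2))
    atTop (nhds 0)}

/-- Asymptotic pairs (limit definition). -/
def asympA {X : Type*} [MetricSpace X] (φ : X ≃ₜ X) : Set (X × X) := asympS φ ∩ asympU φ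

/-- The `ω`-limit set of `x`. -/
def omegaSet {X : Type*} [MetricSpace X] (φ : X ≃ₜ X) (x : X) : Set X :=
  {z | ∃ n : ℕ → ℕ, StrictMono n ∧ Tendsto (fun i => hIter φ (n i) x) atTop (nhds z)}

/-- The `α`-limit set of `x`. -/
def alphaSet {X : Type*} [MetricSpace X] (φ : X ≃ₜ X) (x : X) : Set X :=
  {z | ∃ n : ℕ → ℤ, StrictAnti n ∧ Tendsto (fun i => hIter φ (n i) x) atTop (nhds z)}

/-- A Smale space structure on a compact metric space `X`. -/
structure SmaleSpace (X : Type*) [MetricSpace X] [CompactSpace X] where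
  phi : X ≃ₜ X
  eps : ℝ
  lam : ℝ
  br : X → X → X
  eps_pos : 0 < eps
  lam_pos : 0 < lam
  lam_lt_one : lam < 1
  br_cont : ContinuousOn (fun p : X × X => br p.1 p.2) {p : X × X | dist p.1 p.2 < eps}
  br_self : ∀ x : X, br x x = x
  br_assoc_left : ∀ x y z : X, dist x y < eps → dist (br x y) z < eps → dist x z < eps →
    br (br x y) z = br x z
  br_assoc_right : ∀ x y z : X, dist y z < eps → dist x (br y z) < eps → dist x z < eps →
    br x (br y z) = br x z
  phi_br : ∀ x y : X, dist x y < eps → dist (phi x) (phi y) < eps →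
    phi (br x y) = br (phi x) (phi y)
  contract_s : ∀ x y z : X, br y x = y → dist x y < eps → br z x = z → dist x z < eps →
    dist (phi y) (phi z) ≤ lam * dist y z
  contract_u : ∀ x y z : X, br x y = y → dist x y < eps → br x z = z → dist x z < eps →
    dist (phi.symm y) (phi.symm z) ≤ lam * dist y z

namespace SmaleSpace

variable {X Y : Type*} [MetricSpace X] [CompactSpace X] [MetricSpace Y] [CompactSpace Y]

/-- Local stable set `X^s(x,ε)`. -/
def Xs (S : SmaleSpace X) (x : X) (ε : ℝ) : Set X := {y | S.br y x = y ∧ dist x y < ε}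

/-- Local unstable set `X^u(x,ε)`. -/
def Xu (S : SmaleSpace X) (x : X) (ε : ℝ) : Set X := {y | S.br x y = y ∧ dist x y < ε}

def Gs0 (S : SmaleSpace X) : Set (X × X) := {p | p.2 ∈ S.Xs p.1 S.eps}

def Gu0 (S : SmaleSpace X) : Set (X × X) := {p | p.2 ∈ S.Xu p.1 S.eps}

/-- `G_φ^{s,n} = (φ×φ)^{-n}(G_φ^{s,0})`. -/
def GsN (S : SmaleSpace X) (n : ℤ) : Set (X × X) :=
  {p | (hIter S.phi n p.1, hIter S.phi n p.2) ∈ S.Gs0}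

/-- `G_φ^{u,n} = (φ×φ)^{n}(G_φ^{u,0})`. -/
def GuN (S : SmaleSpace X) (n : ℤ) : Set (X × X) :=
  {p | (hIter S.phi (-n) p.1, hIter S.phi (-n) p.2) ∈ S.Gu0}

def GaN (S : SmaleSpace X) (n : ℤ) : Set (X × X) := S.GsN n ∩ S.GuN n

/-- The asymptotic equivalence relation `G_φ^a = ⋃_{n ≥ 0} G_φ^{a,n}`. -/
def Ga (S : SmaleSpace X) : Set (X × X) := ⋃ n : ℕ, S.GaN n

lemma gaN_subset_ga (S : SmaleSpace X) (n : ℕ) : S.GaN n ⊆ S.Ga :=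
  Set.subset_iUnion (fun k : ℕ => S.GaN k) n

/-- The inductive limit topology on `G_φ^a`: a set is open iff its intersection with each
`G_φ^{a,n}` is open in the subspace topology from `X × X`. -/
def gaTopology (S : SmaleSpace X) : TopologicalSpace ↥S.Ga :=
  ⨆ n : ℕ, TopologicalSpace.coinduced (Set.inclusion (S.gaN_subset_ga n)) inferInstance

/-- Irreducibility of a Smale space. -/
def Irreducible (S : SmaleSpace X) : Prop :=
  ∀ U V : Set X, IsOpen U → U.Nonempty → IsOpen V → V.Nonempty →
    ∃ K : ℕ, ((hIter S.phi K '' U) ∩ V).Nonempty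

def IsPeriodicPoint (S : SmaleSpace X) (x : X) : Prop :=
  ∃ p : ℕ, 0 < p ∧ hIter S.phi p x = x

/-- `h` is a flip conjugacy between `(X,φ)` and `(Y,ψ)`. -/
def IsFlipConjugacy (S : SmaleSpace X) (T : SmaleSpace Y) (h : X ≃ₜ Y) : Prop :=
  (∀ x, h (S.phi x) = T.phi (h x)) ∨ (∀ x, h (S.phi x) = T.phi.symm (h x))

def FlipConjugate (S : SmaleSpace X) (T : SmaleSpace Y) : Prop :=
  ∃ h : X ≃ₜ Y, IsFlipConjugacy S T h

/-- An isomorphism of the principal étale groupoids `G_φ^a` and `G_ψ^a`: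
a bijection which is a homeomorphism for the inductive limit topologies and preserves
the (equivalence relation) groupoid structure. -/
structure GaIso (S : SmaleSpace X) (T : SmaleSpace Y) where
  toEquiv : ↥S.Ga ≃ ↥T.Ga
  cont : @Continuous _ _ S.gaTopology T.gaTopology toEquiv
  cont_symm : @Continuous _ _ T.gaTopology S.gaTopology toEquiv.symm
  map_mul : ∀ p q r : ↥S.Ga, (p : X × X).2 = (q : X × X).1 →
    (r : X × X) = ((p : X × X).1, (q : X × X).2) →
    (toEquiv p : Y × Y).2 = (toEquiv q : Y × Y).1 ∧
      (toEquiv r : Y × Y) = ((toEquiv p : Y × Y).1, (toEquiv q : Y × Y).2)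

end SmaleSpace



section AuxRecPer

open Filter

variable {X : Type*}

section Top
variable [TopologicalSpace X] (φ : X ≃ₜ X)

lemma aux_strictAnti_le {f : ℕ → ℤ} (h : StrictAnti f) (i : ℕ) : f i ≤ f 0 - i := by
  induction i with
  | zero => simp
  | succ k ih => have h2 : f (k+1) < f k := h (by omega); push_cast; push_cast at ih; omega

lemma aux_strictAnti_tendsto {f : ℕ → ℤ} (h : StrictAnti f) : Tendsto f atTop atBot := by
  refine tendsto_atBot.2 fun b => eventually_atTop.2 ⟨(f 0 - b).toNat, fun i hi => ?_⟩
  have := aux_strictAnti_le h i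
  omega

lemma hIter_add (a b : ℤ) (x : X) :
    hIter φ (a + b) x = hIter φ a (hIter φ b x) := by
  simp [hIter, zpow_add, Equiv.Perm.mul_apply]

lemma hIter_zero (x : X) : hIter φ 0 x = x := by simp [hIter]

lemma hIter_one (x : X) : hIter φ 1 x = φ x := by simp [hIter]

lemma hIter_neg_one (x : X) : hIter φ (-1) x = φ.symm x := by simp [hIter]

lemma hIter_continuous (n : ℤ) : Continuous (hIter φ n) := by
  induction n using Int.induction_on with
  | zero => simpa [funext (hIter_zero φ)] using continuous_id'
  | succ k ih =>
      have he : hIter φ (k + 1) = fun x => φ (hIter φ k x) := funext fun x => by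
        rw [add_comm, hIter_add, hIter_one]
      rw [he]; exact φ.continuous.comp ih
  | pred k ih =>
      have he : hIter φ (-(k:ℤ) - 1) = fun x => φ.symm (hIter φ (-k) x) := funext fun x => by
        rw [sub_eq_add_neg, add_comm, hIter_add, hIter_neg_one]
      rw [he]; exact φ.symm.continuous.comp ih

lemma hIter_fix_zpow {q : ℤ} {x : X} (h : hIter φ q x = x) (m : ℤ) :
    hIter φ (m * q) x = x := by
  have hneg : hIter φ (-q) x = x := by
    conv_lhs => rw [← h, ← hIter_add, neg_add_cancel, hIter_zero]
  induction m using Int.induction_on with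
  | zero => simpa using hIter_zero φ x
  | succ k ih => rw [add_mul, one_mul, add_comm, hIter_add, ih, h]
  | pred k ih => rw [sub_mul, one_mul, sub_eq_add_neg, add_comm, hIter_add, ih, hneg]

lemma hIter_neg_fix {p : ℤ} {x : X} (h : hIter φ p x = x) : hIter φ (-p) x = x := by
  conv_lhs => rw [← h, ← hIter_add, neg_add_cancel, hIter_zero]

lemma hIter_mod {q : ℕ} {x : X} (h : hIter φ (q : ℤ) x = x) (n : ℤ) :
    hIter φ n x = hIter φ (n % q) x := by
  conv_lhs => rw [← Int.emod_add_mul_ediv n q]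
  rw [hIter_add, mul_comm, hIter_fix_zpow φ h]

end Top

section Met
variable [MetricSpace X] (φ : X ≃ₜ X)

lemma periodic_of_omega (x : X) (p : ℤ)
    (hS : (hIter φ p x, x) ∈ asympS φ) (hmem : x ∈ omegaSet φ x) :
    hIter φ p x = x := by
  obtain ⟨n, hmono, hlim⟩ := hmem
  simp only [asympS, Set.mem_setOf_eq] at hS
  have hcomp : Tendsto (fun i => hIter φ p (hIter φ (n i) x)) atTop (nhds (hIter φ p x)) :=
    ((hIter_continuous φ p).tendsto x).comp hlim
  have t1 : Tendsto (fun i => dist (hIter φ p x) (hIter φ p (hIter φ (n i) x)))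
      atTop (nhds 0) := by
    simpa using (tendsto_const_nhds (x := hIter φ p x) (f := atTop)).dist hcomp
  have t2 : Tendsto (fun i => dist (hIter φ (n i : ℕ) (hIter φ p x)) (hIter φ (n i : ℕ) x))
      atTop (nhds 0) := hS.comp hmono.tendsto_atTop
  have t3 : Tendsto (fun i => dist (hIter φ (n i : ℕ) x) x) atTop (nhds 0) := by
    simpa using hlim.dist (tendsto_const_nhds (x := x) (f := atTop))
  have tsum : Tendsto (fun i => dist (hIter φ p x) (hIter φ p (hIter φ (n i) x))
      + dist (hIter φ (n i : ℕ) (hIter φ p x)) (hIter φ (n i : ℕ) x)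
      + dist (hIter φ (n i : ℕ) x) x) atTop (nhds 0) := by
    simpa using (t1.add t2).add t3
  have hbound : ∀ i, dist (hIter φ p x) x ≤ dist (hIter φ p x) (hIter φ p (hIter φ (n i) x))
      + dist (hIter φ (n i : ℕ) (hIter φ p x)) (hIter φ (n i : ℕ) x)
      + dist (hIter φ (n i : ℕ) x) x := by
    intro i
    have he : hIter φ p (hIter φ (n i : ℕ) x) = hIter φ (n i : ℕ) (hIter φ p x) := by
      rw [← hIter_add, ← hIter_add, add_comm]
    calc dist (hIter φ p x) x
        ≤ dist (hIter φ p x) (hIter φ p (hIter φ (n i) x))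
          + dist (hIter φ p (hIter φ (n i) x)) (hIter φ (n i : ℕ) x)
          + dist (hIter φ (n i : ℕ) x) x := dist_triangle4 _ _ _ _
      _ = _ := by rw [he]
  have hle : dist (hIter φ p x) x ≤ 0 :=
    le_of_tendsto_of_tendsto' tendsto_const_nhds tsum hbound
  exact dist_le_zero.mp hle

lemma periodic_of_alpha (x : X) (p : ℤ)
    (hU : (hIter φ p x, x) ∈ asympU φ) (hmem : x ∈ alphaSet φ x) :
    hIter φ p x = x := by
  obtain ⟨n, hanti, hlim⟩ := hmem
  simp only [asympU, Set.mem_setOf_eq] at hU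
  have hg : Tendsto (fun m : ℤ => dist (hIter φ m (hIter φ p x)) (hIter φ m x))
      atBot (nhds 0) := by
    rw [Metric.tendsto_nhds] at hU ⊢
    intro ε hε
    obtain ⟨N, hN⟩ := eventually_atTop.1 (hU ε hε)
    refine eventually_atBot.2 ⟨-(N : ℤ), fun m hm => ?_⟩
    have h1 : ((-m).toNat : ℤ) = -m := Int.toNat_of_nonneg (by omega)
    have h2 := hN (-m).toNat (by omega)
    rw [h1, neg_neg] at h2
    exact h2
  have hcomp : Tendsto (fun i => hIter φ p (hIter φ (n i) x)) atTop (nhds (hIter φ p x)) :=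
    ((hIter_continuous φ p).tendsto x).comp hlim
  have t1 : Tendsto (fun i => dist (hIter φ p x) (hIter φ p (hIter φ (n i) x)))
      atTop (nhds 0) := by
    simpa using (tendsto_const_nhds (x := hIter φ p x) (f := atTop)).dist hcomp
  have t2 : Tendsto (fun i => dist (hIter φ (n i) (hIter φ p x)) (hIter φ (n i) x))
      atTop (nhds 0) := hg.comp (aux_strictAnti_tendsto hanti)
  have t3 : Tendsto (fun i => dist (hIter φ (n i) x) x) atTop (nhds 0) := by
    simpa using hlim.dist (tendsto_const_nhds (x := x) (f := atTop))
  have tsum : Tendsto (fun i => dist (hIter φ p x) (hIter φ p (hIter φ (n i) x))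
      + dist (hIter φ (n i) (hIter φ p x)) (hIter φ (n i) x)
      + dist (hIter φ (n i) x) x) atTop (nhds 0) := by
    simpa using (t1.add t2).add t3
  have hbound : ∀ i, dist (hIter φ p x) x ≤ dist (hIter φ p x) (hIter φ p (hIter φ (n i) x))
      + dist (hIter φ (n i) (hIter φ p x)) (hIter φ (n i) x)
      + dist (hIter φ (n i) x) x := by
    intro i
    have he : hIter φ p (hIter φ (n i) x) = hIter φ (n i) (hIter φ p x) := by
      rw [← hIter_add, ← hIter_add, add_comm]
    calc dist (hIter φ p x) x
        ≤ dist (hIter φ p x) (hIter φ p (hIter φ (n i) x))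
          + dist (hIter φ p (hIter φ (n i) x)) (hIter φ (n i) x)
          + dist (hIter φ (n i) x) x := dist_triangle4 _ _ _ _
      _ = _ := by rw [he]
  have hle : dist (hIter φ p x) x ≤ 0 :=
    le_of_tendsto_of_tendsto' tendsto_const_nhds tsum hbound
  exact dist_le_zero.mp hle

lemma orbit_eq_limits (x : X) {q : ℕ} (hq : 0 < q) (hper : hIter φ (q : ℤ) x = x) :
    omegaSet φ x = {z | ∃ j : ℕ, j < q ∧ z = hIter φ j x} ∧
    alphaSet φ x = {z | ∃ j : ℕ, j < q ∧ z = hIter φ j x} := by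
  set T : Set X := {z | ∃ j : ℕ, j < q ∧ z = hIter φ j x} with hT
  have hTfin : T.Finite := by
    have himg : T = (fun j : ℕ => hIter φ (j : ℤ) x) '' (Set.Iio q) := by
      ext z
      constructor
      · rintro ⟨j, hj, rfl⟩; exact ⟨j, hj, rfl⟩
      · rintro ⟨j, hj, rfl⟩; exact ⟨j, hj, rfl⟩
    rw [himg]
    exact (Set.finite_Iio q).image _
  have hTclosed : IsClosed T := hTfin.isClosed
  have hmemT : ∀ m : ℤ, hIter φ m x ∈ T := by
    intro m
    have hmod := hIter_mod φ hper m
    have h0 : (0 : ℤ) ≤ m % q := Int.emod_nonneg m (by exact_mod_cast hq.ne')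
    have h1 : m % q < q := Int.emod_lt_of_pos m (by exact_mod_cast hq)
    refine ⟨(m % q).toNat, by omega, ?_⟩
    rw [hmod, Int.toNat_of_nonneg h0]
  have hTsubω : T ⊆ omegaSet φ x := by
    rintro z ⟨j, hj, rfl⟩
    refine ⟨fun i => j + i * q, fun a b hab => by
      exact Nat.add_lt_add_left ((Nat.mul_lt_mul_right hq).2 hab) j, ?_⟩
    have he : ∀ i : ℕ, hIter φ ((j + i * q : ℕ) : ℤ) x = hIter φ (j : ℤ) x := by
      intro i
      push_cast
      rw [hIter_add, hIter_fix_zpow φ hper]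
    simp only [he]
    exact tendsto_const_nhds
  have hTsubα : T ⊆ alphaSet φ x := by
    rintro z ⟨j, hj, rfl⟩
    refine ⟨fun i => (j : ℤ) - i * q, fun a b hab => ?_, ?_⟩
    · have h2 : (a : ℤ) * q < b * q := by
        have : (a : ℤ) < b := by exact_mod_cast hab
        exact mul_lt_mul_of_pos_right this (by exact_mod_cast hq)
      show (j:ℤ) - b * q < (j:ℤ) - a * q
      omega
    · have he : ∀ i : ℕ, hIter φ ((j : ℤ) - i * q) x = hIter φ (j : ℤ) x := by
        intro i
        rw [sub_eq_add_neg, hIter_add, ← neg_mul, hIter_fix_zpow φ hper]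
      simp only [he]
      exact tendsto_const_nhds
  constructor
  · refine le_antisymm ?_ hTsubω
    rintro z ⟨n, hmono, hlim⟩
    exact hTclosed.mem_of_tendsto hlim (Filter.Eventually.of_forall fun i => hmemT (n i))
  · refine le_antisymm ?_ hTsubα
    rintro z ⟨n, hanti, hlim⟩
    exact hTclosed.mem_of_tendsto hlim (Filter.Eventually.of_forall fun i => hmemT (n i))

end Met

end AuxRecPer

/-- For an asymptotic periodic point `x` of a Smale space, the conditions
(i) `x ∈ ω(x) ∪ α(x)`, (ii) `x` is periodic, (iii) `ω(x) = α(x) = {x, φ(x), …,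
φ^{p_s-1}(x)}` for some `p_s ∈ ℕ`, and (iv) `x` is recurrent, are all equivalent. -/
theorem recurrent_iff_periodic {X : Type*} [MetricSpace X] [CompactSpace X]
    (S : SmaleSpace X) (x : X)
    (hx : ∃ p : ℤ, p ≠ 0 ∧ (hIter S.phi p x, x) ∈ asympA S.phi) :
    ((x ∈ omegaSet S.phi x ∪ alphaSet S.phi x) ↔
      (∃ q : ℕ, 0 < q ∧ hIter S.phi q x = x)) ∧
    ((∃ q : ℕ, 0 < q ∧ hIter S.phi q x = x) ↔
      (∃ ps : ℕ, 0 < ps ∧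
        omegaSet S.phi x = {z | ∃ j : ℕ, j < ps ∧ z = hIter S.phi j x} ∧
        alphaSet S.phi x = {z | ∃ j : ℕ, j < ps ∧ z = hIter S.phi j x})) ∧
    ((∃ ps : ℕ, 0 < ps ∧
        omegaSet S.phi x = {z | ∃ j : ℕ, j < ps ∧ z = hIter S.phi j x} ∧
        alphaSet S.phi x = {z | ∃ j : ℕ, j < ps ∧ z = hIter S.phi j x}) ↔
      x ∈ omegaSet S.phi x ∩ alphaSet S.phi x) := by
  obtain ⟨p, hp, hA⟩ := hx
  have key1 : x ∈ omegaSet S.phi x ∪ alphaSet S.phi x →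
      ∃ q : ℕ, 0 < q ∧ hIter S.phi q x = x := by
    intro h
    have hpx : hIter S.phi p x = x := by
      cases h with
      | inl h => exact periodic_of_omega S.phi x p hA.1 h
      | inr h => exact periodic_of_alpha S.phi x p hA.2 h
    refine ⟨p.natAbs, Int.natAbs_pos.2 hp, ?_⟩
    rcases Int.natAbs_eq p with he | he
    · rw [← he]; exact hpx
    · have h2 : ((p.natAbs : ℤ)) = -p := by omega
      rw [h2]; exact hIter_neg_fix S.phi hpx
  have key2 : (∃ q : ℕ, 0 < q ∧ hIter S.phi q x = x) →
      (∃ ps : ℕ, 0 < ps ∧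
        omegaSet S.phi x = {z | ∃ j : ℕ, j < ps ∧ z = hIter S.phi j x} ∧
        alphaSet S.phi x = {z | ∃ j : ℕ, j < ps ∧ z = hIter S.phi j x}) := by
    rintro ⟨q, hq, hper⟩
    exact ⟨q, hq, orbit_eq_limits S.phi x hq hper⟩
  have key3 : (∃ ps : ℕ, 0 < ps ∧
        omegaSet S.phi x = {z | ∃ j : ℕ, j < ps ∧ z = hIter S.phi j x} ∧
        alphaSet S.phi x = {z | ∃ j : ℕ, j < ps ∧ z = hIter S.phi j x}) →
      x ∈ omegaSet S.phi x ∩ alphaSet S.phi x := by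
    rintro ⟨ps, hps, hω, hα⟩
    constructor
    · rw [hω]; exact ⟨0, hps, by simp [hIter_zero]⟩
    · rw [hα]; exact ⟨0, hps, by simp [hIter_zero]⟩
  exact ⟨⟨key1, fun h => Or.inl (key3 (key2 h)).1⟩,
    ⟨key2, fun h => key1 (Or.inl (key3 h).1)⟩,
    ⟨key3, fun h => key2 (key1 (Or.inl h.1))⟩⟩
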